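/- For every configuration ω ∈ Ω, every site z ∈ ℤ₊² and any two ω-optimal paths γ, γ' ∈ Γ_z, there exists an ω-optimal path γ'' ∈ Γ_z that is below both γ and γ'. -/

import Mathlib

open scoped NNReal

/-- A site of the lattice `ℤ²`. -/
abbrev Site : Type := ℤ × ℤ

/-- The positive quadrant `ℤ₊²`. -/
def posQuad : Set Site := {z : Site | 0 ≤ z.1 ∧ 0 ≤ z.2}

/-- An admissible (up-right) step. -/
def IsStep (u v : Site) : Prop := v = u + (1, 0) ∨ v = u + (0, 1)

/-- `γ` is an up-right path from `(0,0)` to `z`, i.e. `γ ∈ Γ_z`. -/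
def IsPathTo (z : Site) (γ : List Site) : Prop :=
  γ.head? = some ((0, 0) : Site) ∧ γ.getLast? = some z ∧ γ.Chain' IsStep

/-- The length `ω(γ) = Σ_{z ∈ γ} ω(z)` of a path `γ` under the configuration `ω`. -/
noncomputable def plen (ω : Site → ℝ) (γ : List Site) : ℝ := (γ.map ω).sum

/-- `γ ∈ Γ_z` is `ω`-optimal if its length is maximal over `Γ_z`. -/
def IsOptimal (ω : Site → ℝ) (z : Site) (γ : List Site) : Prop :=
  IsPathTo z γ ∧ ∀ γ' : List Site, IsPathTo z γ' → plen ω γ' ≤ plen ω γ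

/-- `γ` is below `γ'`: at every step index, the second coordinate of the site of `γ`
is at most that of the corresponding site of `γ'`. -/
def Below (γ γ' : List Site) : Prop :=
  ∀ (i : ℕ) (h : i < γ.length) (h' : i < γ'.length),
    (γ.get ⟨i, h⟩).2 ≤ (γ'.get ⟨i, h'⟩).2

/-- `γ` is the low-optimal path of `Γ_z`: it is `ω`-optimal and below every
`ω`-optimal path of `Γ_z`. -/
def IsLowOptimal (ω : Site → ℝ) (z : Site) (γ : List Site) : Prop :=
  IsOptimal ω z γ ∧ ∀ γ' : List Site, IsOptimal ω z γ' → Below γ γ'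

open Classical in
/-- The low-optimal path `γ_z^ω` (an arbitrary default when it does not exist). -/
noncomputable def lowOpt (ω : Site → ℝ) (z : Site) : List Site :=
  if h : ∃ γ : List Site, IsLowOptimal ω z γ then h.choose else []

/-- The vertex set `V(T_z^ω) = {z' ∈ ℤ₊² : z ∈ γ_{z'}^ω}` of the subtree rooted at `z`. -/
def treeV (ω : Site → ℝ) (z : Site) : Set Site :=
  {z' : Site | z' ∈ posQuad ∧ z ∈ lowOpt ω z'}

/-! ### Auxiliary material -/

lemma isStep_iff {u v : Site} :
    IsStep u v ↔ v.1 + v.2 = u.1 + u.2 + 1 ∧ (v.2 = u.2 ∨ v.2 = u.2 + 1) := by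
  simp only [IsStep, Prod.ext_iff, Prod.fst_add, Prod.snd_add]
  omega

lemma IsPathTo.ne_nil {z : Site} {γ : List Site} (hp : IsPathTo z γ) : γ ≠ [] := by
  rintro rfl; simpa using hp.1

lemma IsPathTo.length_pos {z : Site} {γ : List Site} (hp : IsPathTo z γ) : 0 < γ.length :=
  List.length_pos_iff.mpr hp.ne_nil

lemma IsPathTo.getElem_zero {z : Site} {γ : List Site} (hp : IsPathTo z γ)
    (h0 : 0 < γ.length) : γ[0] = ((0, 0) : Site) := by
  have h1 := hp.1
  rw [List.head?_eq_getElem?, List.getElem?_eq_getElem h0] at h1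
  simpa using h1

lemma IsPathTo.getElem_last {z : Site} {γ : List Site} (hp : IsPathTo z γ)
    (h0 : γ.length - 1 < γ.length) : γ[γ.length - 1] = z := by
  have h1 := hp.2.1
  rw [List.getLast?_eq_getElem?, List.getElem?_eq_getElem h0] at h1
  simpa using h1

lemma IsPathTo.step {z : Site} {γ : List Site} (hp : IsPathTo z γ)
    {i : ℕ} (hi : i + 1 < γ.length) :
    IsStep (γ[i]'(by omega)) (γ[i+1]'hi) := by
  have := List.isChain_iff_getElem.mp hp.2.2 i (by omega)
  simpa [List.get_eq_getElem] using this

lemma IsPathTo.coordSum {z : Site} {γ : List Site} (hp : IsPathTo z γ) :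
    ∀ i (h : i < γ.length), (γ[i]'h).1 + (γ[i]'h).2 = (i : ℤ) := by
  intro i
  induction i with
  | zero => intro h; rw [hp.getElem_zero h]; simp
  | succ n ih =>
    intro h
    have hstep := hp.step h
    rw [isStep_iff] at hstep
    have := ih (by omega)
    push_cast
    omega

lemma IsPathTo.length_eq {z : Site} {γ : List Site} (hp : IsPathTo z γ) :
    (γ.length : ℤ) = z.1 + z.2 + 1 := by
  have h0 : 0 < γ.length := hp.length_pos
  have h1 : γ.length - 1 < γ.length := by omega
  have h2 := hp.coordSum (γ.length - 1) h1
  rw [hp.getElem_last h1] at h2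
  omega

/-- The "lower" combination of two sites. -/
def fmin (a b : Site) : Site := if a.2 ≤ b.2 then a else b

/-- The "upper" combination of two sites. -/
def fmax (a b : Site) : Site := if a.2 ≤ b.2 then b else a

lemma fmin_mem (a b : Site) : fmin a b = a ∨ fmin a b = b := by
  unfold fmin; split <;> simp

lemma fmax_mem (a b : Site) : fmax a b = a ∨ fmax a b = b := by
  unfold fmax; split <;> simp

lemma isPathTo_zipWith {f : Site → Site → Site}
    (hmem : ∀ a b, f a b = a ∨ f a b = b)
    (hsnd : ∀ a b a' b', IsStep a a' → IsStep b b' →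
      (f a' b').2 = (f a b).2 ∨ (f a' b').2 = (f a b).2 + 1)
    {z : Site} {γ γ' : List Site} (hγ : IsPathTo z γ) (hγ' : IsPathTo z γ') :
    IsPathTo z (List.zipWith f γ γ') := by
  have hlen : γ.length = γ'.length := by
    have := hγ.length_eq; have := hγ'.length_eq; omega
  have hL : (List.zipWith f γ γ').length = γ.length := by
    rw [List.length_zipWith]; omega
  have h0 : 0 < (List.zipWith f γ γ').length := by rw [hL]; exact hγ.length_pos
  have hcoord : ∀ i (h : i < (List.zipWith f γ γ').length),
      ((List.zipWith f γ γ')[i]'h).1 + ((List.zipWith f γ γ')[i]'h).2 = (i : ℤ) := by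
    intro i hi
    rw [List.getElem_zipWith]
    rcases hmem (γ[i]'(by omega)) (γ'[i]'(by omega)) with he | he <;> rw [he]
    · exact hγ.coordSum i (by omega)
    · exact hγ'.coordSum i (by omega)
  refine ⟨?_, ?_, ?_⟩
  · rw [List.head?_eq_getElem?, List.getElem?_eq_getElem h0, List.getElem_zipWith]
    rw [hγ.getElem_zero hγ.length_pos, hγ'.getElem_zero (by omega)]
    rcases hmem ((0,0) : Site) ((0,0) : Site) with he | he <;> rw [he]
  · have h1 : (List.zipWith f γ γ').length - 1 < (List.zipWith f γ γ').length := by omega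
    rw [List.getLast?_eq_getElem?, List.getElem?_eq_getElem h1, List.getElem_zipWith]
    have e1 : (γ[(List.zipWith f γ γ').length - 1]'(by omega)) = z := by
      have := hγ.getElem_last (by omega)
      convert this using 2 <;> omega
    have e2 : (γ'[(List.zipWith f γ γ').length - 1]'(by omega)) = z := by
      have := hγ'.getElem_last (by omega)
      convert this using 2 <;> omega
    rw [e1, e2]
    rcases hmem z z with he | he <;> rw [he]
  · refine List.isChain_iff_getElem.mpr ?_
    intro i hi
    simp only [List.get_eq_getElem, List.getElem_zipWith]
    have hiγ : i + 1 < γ.length := by omega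
    have hiγ' : i + 1 < γ'.length := by omega
    rw [isStep_iff]
    constructor
    · have c1 : ((List.zipWith f γ γ')[i]'(by omega)).1 +
          ((List.zipWith f γ γ')[i]'(by omega)).2 = (i : ℤ) := hcoord i (by omega)
      have c2 : ((List.zipWith f γ γ')[i+1]'(by omega)).1 +
          ((List.zipWith f γ γ')[i+1]'(by omega)).2 = ((i : ℤ) + 1) := by
        have := hcoord (i+1) (by omega); push_cast at this; omega
      simp only [List.getElem_zipWith] at c1 c2
      omega
    · exact hsnd _ _ _ _ (hγ.step hiγ) (hγ'.step hiγ')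

lemma plen_cons (ω : Site → ℝ) (a : Site) (γ : List Site) :
    plen ω (a :: γ) = ω a + plen ω γ := by simp [plen]

lemma plen_zipWith_add (ω : Site → ℝ) :
    ∀ (γ γ' : List Site), γ.length = γ'.length →
      plen ω (List.zipWith fmin γ γ') + plen ω (List.zipWith fmax γ γ') =
        plen ω γ + plen ω γ' := by
  intro γ
  induction γ with
  | nil =>
    intro γ' h
    have : γ' = [] := by simpa [eq_comm, List.length_eq_zero_iff] using h
    subst this; simp [plen]
  | cons a γ ih =>
    intro γ' h
    cases γ' with
    | nil => simp at h
    | cons b γ' =>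
      have hlen : γ.length = γ'.length := by simpa using h
      have key : ω (fmin a b) + ω (fmax a b) = ω a + ω b := by
        unfold fmin fmax; split <;> ring
      simp only [List.zipWith_cons_cons, plen_cons]
      have := ih γ' hlen
      linarith

/-- For any two `ω`-optimal paths of `Γ_z` there is an `ω`-optimal path of `Γ_z`
below both of them. -/
theorem exists_optimal_below (ω : Site → ℝ) (hω : ∀ z : Site, 0 ≤ ω z)
    (z : Site) (hz : z ∈ posQuad) (γ γ' : List Site)
    (h : IsOptimal ω z γ) (h' : IsOptimal ω z γ') :
    ∃ γ'' : List Site, IsOptimal ω z γ'' ∧ Below γ'' γ ∧ Below γ'' γ' := by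
  have hlen : γ.length = γ'.length := by
    have := h.1.length_eq; have := h'.1.length_eq; omega
  have hsndmin : ∀ a b a' b' : Site, IsStep a a' → IsStep b b' →
      (fmin a' b').2 = (fmin a b).2 ∨ (fmin a' b').2 = (fmin a b).2 + 1 := by
    intro a b a' b' ha hb
    rw [isStep_iff] at ha hb
    unfold fmin
    split <;> split <;> omega
  have hsndmax : ∀ a b a' b' : Site, IsStep a a' → IsStep b b' →
      (fmax a' b').2 = (fmax a b).2 ∨ (fmax a' b').2 = (fmax a b).2 + 1 := by
    intro a b a' b' ha hb
    rw [isStep_iff] at ha hb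
    unfold fmax
    split <;> split <;> omega
  have hm : IsPathTo z (List.zipWith fmin γ γ') :=
    isPathTo_zipWith fmin_mem hsndmin h.1 h'.1
  have hM : IsPathTo z (List.zipWith fmax γ γ') :=
    isPathTo_zipWith fmax_mem hsndmax h.1 h'.1
  have hsum := plen_zipWith_add ω γ γ' hlen
  have heq : plen ω γ' = plen ω γ := le_antisymm (h.2 γ' h'.1) (h'.2 γ h.1)
  have hMle : plen ω (List.zipWith fmax γ γ') ≤ plen ω γ := h.2 _ hM
  have hmge : plen ω γ ≤ plen ω (List.zipWith fmin γ γ') := by linarith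
  refine ⟨List.zipWith fmin γ γ', ⟨hm, fun ρ hρ => (h.2 ρ hρ).trans hmge⟩, ?_, ?_⟩
  · intro i hi hi'
    simp only [List.get_eq_getElem, List.getElem_zipWith]
    unfold fmin
    split <;> simp_all <;> omega
  · intro i hi hi'
    simp only [List.get_eq_getElem, List.getElem_zipWith]
    unfold fmin
    split <;> simp_all <;> omega
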